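/- MMA swizzled layouts are invertible mappings: for natural numbers p, q, v, m, n with q + v ≤ n, the map on Fin (2^m) × Fin (2^n) sending (i, j) to (i, swz p q v i j) (well-defined since swz p q v i j < 2^n whenever j < 2^n) is a bijection; indeed it is an involution, i.e., applying it twice gives the identity. -/

import Mathlib

/-- The mma swizzle function: `swz p q v i j` is the shared-memory offset assigned to the
tensor element at coordinates `(i, j)` of a `2 ^ m × 2 ^ n` tensor tile. -/
def swz (p q v i j : ℕ) : ℕ :=
  ((((i / 2 ^ p) % 2 ^ q) ^^^ (j / 2 ^ v)) * 2 ^ v) ^^^ (j % 2 ^ v)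

/-- XOR with a low part below `2 ^ v` acts like addition on a multiple of `2 ^ v`. -/
lemma swz_xor_low (a b i : ℕ) (hb : b < 2 ^ i) : (2 ^ i * a) ^^^ b = 2 ^ i * a + b := by
  rw [Nat.two_pow_add_eq_or_of_lt hb]
  apply Nat.eq_of_testBit_eq
  intro j
  rcases lt_or_ge j i with hj | hj
  · have h1 : (2 ^ i * a).testBit j = false := by
      rw [Nat.testBit_two_pow_mul]
      simp [Nat.not_le.mpr hj]
    simp [Nat.testBit_xor, Nat.testBit_or, h1]
  · have h2 : b.testBit j = false :=
      Nat.testBit_lt_two_pow (lt_of_lt_of_le hb (Nat.pow_le_pow_right (by norm_num) hj))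
    simp [Nat.testBit_xor, Nat.testBit_or, h2]

lemma swz_lt (p q v n : ℕ) (h : q + v ≤ n) {i j : ℕ} (hj : j < 2 ^ n) :
    swz p q v i j < 2 ^ n := by
  unfold swz
  have ha : (i / 2 ^ p) % 2 ^ q < 2 ^ (n - v) :=
    lt_of_lt_of_le (Nat.mod_lt _ (Nat.two_pow_pos q))
      (Nat.pow_le_pow_right (by norm_num) (by omega))
  have hjd : j / 2 ^ v < 2 ^ (n - v) := by
    rw [Nat.div_lt_iff_lt_mul (Nat.two_pow_pos v), ← Nat.pow_add]
    have : n - v + v = n := by omega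
    rwa [this]
  have hx : ((i / 2 ^ p) % 2 ^ q) ^^^ (j / 2 ^ v) < 2 ^ (n - v) :=
    Nat.xor_lt_two_pow ha hjd
  have hm : j % 2 ^ v < 2 ^ v := Nat.mod_lt _ (Nat.two_pow_pos v)
  calc ((((i / 2 ^ p) % 2 ^ q) ^^^ (j / 2 ^ v)) * 2 ^ v) ^^^ (j % 2 ^ v)
      = 2 ^ v * (((i / 2 ^ p) % 2 ^ q) ^^^ (j / 2 ^ v)) + j % 2 ^ v := by
        rw [mul_comm]; exact swz_xor_low _ _ _ hm
    _ < 2 ^ v * ((((i / 2 ^ p) % 2 ^ q) ^^^ (j / 2 ^ v)) + 1) := by rw [Nat.mul_add, Nat.mul_one]; omega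
    _ ≤ 2 ^ v * 2 ^ (n - v) := Nat.mul_le_mul_left _ (Nat.succ_le_of_lt hx)
    _ ≤ 2 ^ n := by rw [← Nat.pow_add]; exact Nat.pow_le_pow_right (by norm_num) (by omega)

lemma swz_invol (p q v i j : ℕ) : swz p q v i (swz p q v i j) = j := by
  set a := (i / 2 ^ p) % 2 ^ q with ha
  have hm : j % 2 ^ v < 2 ^ v := Nat.mod_lt _ (Nat.two_pow_pos v)
  have key : swz p q v i j = 2 ^ v * (a ^^^ j / 2 ^ v) + j % 2 ^ v := by
    unfold swz
    rw [mul_comm]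
    exact swz_xor_low _ _ _ hm
  have hdiv : swz p q v i j / 2 ^ v = a ^^^ j / 2 ^ v := by
    rw [key, Nat.mul_add_div (Nat.two_pow_pos v), Nat.div_eq_of_lt hm, add_zero]
  have hmod : swz p q v i j % 2 ^ v = j % 2 ^ v := by
    rw [key, Nat.mul_add_mod, Nat.mod_mod_of_dvd _ dvd_rfl]
  conv_lhs => rw [swz, hdiv, hmod, ← ha, Nat.xor_xor_cancel_left]
  rw [mul_comm, swz_xor_low _ _ _ hm]
  exact Nat.div_add_mod j (2 ^ v)

/-- MMA swizzled layouts are invertible mappings: the map on `Fin (2 ^ m) × Fin (2^n)`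
sending `(i, j)` to `(i, swz p q v i j)` is well defined (the swizzled column stays below
`2 ^ n`), is an involution, and hence a bijection. -/
theorem swz_layout_bijective (p q v m n : ℕ) (h : q + v ≤ n) :
    ∃ f : Fin (2 ^ m) × Fin (2 ^ n) → Fin (2 ^ m) × Fin (2 ^ n),
      (∀ x : Fin (2 ^ m) × Fin (2 ^ n),
        (f x).1 = x.1 ∧ ((f x).2 : ℕ) = swz p q v (x.1 : ℕ) (x.2 : ℕ)) ∧
      f ∘ f = id ∧ Function.Bijective f := by
  refine ⟨fun x => (x.1, ⟨swz p q v x.1 x.2, swz_lt p q v n h x.2.isLt⟩), fun x => ⟨rfl, rfl⟩, ?_, ?_⟩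
  · funext x
    simp only [Function.comp_apply, id_eq]
    refine Prod.ext rfl (Fin.ext ?_)
    exact swz_invol p q v x.1 x.2
  · have hinv : Function.LeftInverse
        (fun x : Fin (2 ^ m) × Fin (2 ^ n) => ((x.1 : Fin (2 ^ m)), (⟨swz p q v x.1 x.2, swz_lt p q v n h x.2.isLt⟩ : Fin (2 ^ n))))
        (fun x : Fin (2 ^ m) × Fin (2 ^ n) => ((x.1 : Fin (2 ^ m)), (⟨swz p q v x.1 x.2, swz_lt p q v n h x.2.isLt⟩ : Fin (2 ^ n)))) := by
      intro x
      refine Prod.ext rfl (Fin.ext ?_)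
      exact swz_invol p q v x.1 x.2
    exact ⟨hinv.injective, hinv.surjective⟩
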